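/- Let w : J ⥤ I be a functor between small categories. The functor L : Cat/J ⥤ (I ⥤ Cat), sending an object (A, v : A ⥤ J) of the over category Cat/J to the functor i ↦ (w ∘ v)/i (the comma category whose objects are pairs (a, p : w(v a) ⟶ i)), is left adjoint to the functor R : (I ⥤ Cat) ⥤ Cat/J sending F : I ⥤ Cat to the Grothendieck construction ∫(w ⋙ F) equipped with its canonical projection to J. -/

import Mathlib

open CategoryTheory Limits

namespace Paper

/-- Repackage a functor between small categories as a morphism in `Cat`. -/
abbrev catHom {C D : Type} [Category.{0} C] [Category.{0} D] (F : C ⥤ D) :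
    Cat.of C ⟶ Cat.of D := F.toCatHom

/-- The functor `A/i ⥤ A'/i` induced by a triangle `h ≫ v' = v` over `I`. -/
def preComma {A A' I : Cat.{0,0}} (h : A ⟶ A') (v : A ⟶ I) (v' : A' ⟶ I)
    (hc : h ≫ v' = v) (i : I) : CostructuredArrow v.toFunctor i ⥤ CostructuredArrow v'.toFunctor i where
  obj f := CostructuredArrow.mk (Y := h.toFunctor.obj f.left)
    (eqToHom (Functor.congr_obj (congrArg Cat.Hom.toFunctor hc) f.left) ≫ f.hom)
  map {f f'} φ := CostructuredArrow.homMk (h.toFunctor.map φ.left) (by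
    have hh := Functor.congr_hom (congrArg Cat.Hom.toFunctor hc) φ.left
    dsimp at hh ⊢
    rw [hh]
    simp only [Category.assoc, eqToHom_trans_assoc, eqToHom_refl, Category.id_comp]
    rw [CostructuredArrow.w φ])
  map_id f := by apply CostructuredArrow.ext; simp
  map_comp φ ψ := by apply CostructuredArrow.ext; simp

/-- `Θ_I` : the functor `Cat/I ⥤ (I ⥤ Cat)` sending `(A, v : A ⥤ I)` to the functor
`i ↦ A/i` (comma categories). -/
def overToFunctor (I : Cat.{0,0}) : Over I ⥤ (↥I ⥤ Cat.{0,0}) where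
  obj X := CostructuredArrow.functor X.hom.toFunctor
  map {X Y} φ :=
    { app := fun i => catHom (preComma φ.left X.hom Y.hom (Over.w φ) i)
      naturality := fun i i' k => by
        apply Cat.Hom.ext
        show CostructuredArrow.map k ⋙ preComma φ.left X.hom Y.hom (Over.w φ) i'
          = preComma φ.left X.hom Y.hom (Over.w φ) i ⋙ CostructuredArrow.map k
        exact CategoryTheory.Functor.ext
          (fun f => by simp [preComma, CostructuredArrow.map, Comma.mapRight]; try rfl)
          (fun f g ψ => by
            apply CostructuredArrow.ext
            simp [preComma, CostructuredArrow.map, Comma.mapRight,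
              CostructuredArrow.eqToHom_left]
            erw [Comma.eqToHom_left, Comma.eqToHom_left]
            simp) }
  map_id X := by
    apply NatTrans.ext
    funext i
    apply Cat.Hom.ext
    show preComma (𝟙 X.left) X.hom X.hom (by simp) i = 𝟭 (CostructuredArrow X.hom.toFunctor i)
    exact CategoryTheory.Functor.ext
      (fun f => by simp [preComma]; try rfl)
      (fun f g ψ => by
        apply CostructuredArrow.ext
        simp [preComma, CostructuredArrow.eqToHom_left]
        erw [Comma.eqToHom_left, Comma.eqToHom_left]
        simp
        rfl)
  map_comp {X Y Z} φ ψ := by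
    apply NatTrans.ext
    funext i
    apply Cat.Hom.ext
    show preComma (φ.left ≫ ψ.left) X.hom Z.hom (by rw [Category.assoc, Over.w ψ, Over.w φ]) i
      = preComma φ.left X.hom Y.hom (Over.w φ) i ⋙ preComma ψ.left Y.hom Z.hom (Over.w ψ) i
    exact CategoryTheory.Functor.ext
      (fun f => by simp [preComma]; try rfl)
      (fun f g χ => by
        apply CostructuredArrow.ext
        simp [preComma, CostructuredArrow.eqToHom_left]
        erw [Comma.eqToHom_left, Comma.eqToHom_left]
        simp)

/-! ### Auxiliary lemmas for the adjunction -/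

/-- Equality of objects in a Grothendieck construction. -/
theorem grObjExt {C : Type} [Category.{0} C] {F : C ⥤ Cat.{0,0}}
    {b b' : C} (h : b = b') {x : F.obj b} {x' : F.obj b'} (hx : HEq x x') :
    (⟨b, x⟩ : Grothendieck F) = ⟨b', x'⟩ := by
  subst h
  rw [eq_of_heq hx]

/-- HEq of costructured arrows with equal targets. -/
theorem csaHEq {A I' : Type} [Category.{0} A] [Category.{0} I'] {S : A ⥤ I'} {c : A}
    {j j' : I'} (e : j = j') (p : S.obj c ⟶ j) (p' : S.obj c ⟶ j')
    (hp : p ≫ eqToHom e = p') :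
    HEq (CostructuredArrow.mk p) (CostructuredArrow.mk p') := by
  subst e
  simp only [eqToHom_refl, Category.comp_id] at hp
  subst hp
  rfl

variable {J I : Cat.{0,0}} (w : J ⟶ I)

/-- `F ⋙ G`, unfolding reducibly. -/
abbrev cmp {A B C : Type} [Category.{0} A] [Category.{0} B] [Category.{0} C] (F : A ⥤ B)
    (G : B ⥤ C) : A ⥤ C where
  obj X := G.obj (F.obj X)
  map f := G.map (F.map f)
  map_id X := (F ⋙ G).map_id X
  map_comp f g := (F ⋙ G).map_comp f g

/-- `𝟭 A`, unfolding reducibly. -/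
abbrev idf (A : Type) [Category.{0} A] : A ⥤ A where
  obj X := X
  map f := f

/-- `Grothendieck.map`, unfolding reducibly. -/
abbrev gmap {F G : ↥J ⥤ Cat.{0,0}} (α : F ⟶ G) : Grothendieck F ⥤ Grothendieck G where
  obj X := ⟨X.base, (α.app X.base).toFunctor.obj X.fiber⟩
  map {X Y} f := ⟨f.base, (eqToHom (α.naturality f.base).symm).toNatTrans.app X.fiber ≫
      (α.app Y.base).toFunctor.map f.fiber⟩
  map_id X := (Grothendieck.map α).map_id X
  map_comp f g := (Grothendieck.map α).map_comp f g

/-- `w ⋙ F`, unfolding reducibly. -/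
abbrev wc (F : ↥I ⥤ Cat.{0,0}) : ↥J ⥤ Cat.{0,0} where
  obj j := F.obj (w.toFunctor.obj j)
  map f := F.map (w.toFunctor.map f)
  map_id j := (w.toFunctor ⋙ F).map_id j
  map_comp f g := (w.toFunctor ⋙ F).map_comp f g

/-- `v ⋙ w`, unfolding reducibly. -/
abbrev vw {A : Type} [Category.{0} A] (v : A ⥤ ↥J) : A ⥤ ↥I where
  obj a := w.toFunctor.obj (v.obj a)
  map φ := w.toFunctor.map (v.map φ)
  map_id a := (v ⋙ w.toFunctor).map_id a
  map_comp f g := (v ⋙ w.toFunctor).map_comp f g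

/-- `CostructuredArrow.functor`, unfolding reducibly. -/
abbrev csf {A : Type} [Category.{0} A] (S : A ⥤ ↥I) : ↥I ⥤ Cat.{0,0} where
  obj i := ⟨CostructuredArrow S i, inferInstance⟩
  map k := ⟨CostructuredArrow.map k⟩
  map_id d := (CostructuredArrow.functor S).map_id d
  map_comp f g := (CostructuredArrow.functor S).map_comp f g

/-- The projection `∫F ⥤ J`, unfolding reducibly. -/
abbrev fg (F : ↥I ⥤ Cat.{0,0}) : Grothendieck (wc w F) ⥤ ↥J where
  obj x := x.base
  map f := f.base
  map_id x := (Grothendieck.forget (wc w F)).map_id x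
  map_comp f g := (Grothendieck.forget (wc w F)).map_comp f g

/-- The projection `∫(w ⋙ F) ⥤ I`. -/
abbrev pw (F : ↥I ⥤ Cat.{0,0}) : Grothendieck (wc w F) ⥤ ↥I := vw w (fg w F)

/-- The functor `A/i ⥤ A'/i` induced by a triangle `H ⋙ v' = v`. -/
abbrev preC {A A' : Type} [Category.{0} A] [Category.{0} A'] (H : A ⥤ A') (v : A ⥤ ↥I)
    (v' : A' ⥤ ↥I) (hc : cmp H v' = v) (i : ↥I) :
    CostructuredArrow v i ⥤ CostructuredArrow v' i where
  obj f := CostructuredArrow.mk (Y := H.obj f.left)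
    (eqToHom (show v'.obj (H.obj f.left) = v.obj f.left from Functor.congr_obj hc f.left) ≫ f.hom)
  map {f f'} φ := CostructuredArrow.homMk (H.map φ.left) (by
    have hh : v'.map (H.map φ.left) = eqToHom (Functor.congr_obj hc f.left) ≫ v.map φ.left ≫
        eqToHom (Functor.congr_obj hc f'.left).symm := Functor.congr_hom hc φ.left
    dsimp
    rw [hh]
    simp only [Category.assoc, eqToHom_trans_assoc, eqToHom_refl, Category.id_comp]
    rw [CostructuredArrow.w φ])
  map_id f := by apply CostructuredArrow.ext; simp
  map_comp φ ψ := by apply CostructuredArrow.ext; simp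

/-- The unit functor. -/
abbrev etaG {A : Type} [Category.{0} A] (v : A ⥤ ↥J) : A ⥤ Grothendieck (wc w (csf (vw w v))) where
  obj a := ⟨v.obj a, CostructuredArrow.mk (Y := a) (𝟙 _)⟩
  map {a a'} φ := ⟨v.map φ, CostructuredArrow.homMk φ (by simp)⟩
  map_id a := by
    refine Grothendieck.ext _ _ (by simp) ?_
    apply CostructuredArrow.ext
    simp
    erw [Comma.eqToHom_left, Comma.eqToHom_left]
  map_comp φ ψ := by
    refine Grothendieck.ext _ _ (by simp) ?_
    apply CostructuredArrow.ext
    simp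
    erw [Comma.eqToHom_left, Comma.eqToHom_left]

/-- The unit naturality transformation. -/
abbrev uα {A A' : Type} [Category.{0} A] [Category.{0} A'] (H : A ⥤ A') (v : A ⥤ ↥J)
    (v' : A' ⥤ ↥J) (hc : cmp H (vw w v') = vw w v) :
    wc w (csf (vw w v)) ⟶ wc w (csf (vw w v')) where
  app j := ⟨preC H (vw w v) (vw w v') hc (w.toFunctor.obj j)⟩
  naturality j j' k := by
    apply Cat.Hom.ext
    exact CategoryTheory.Functor.ext
      (fun f => by simp [preC, CostructuredArrow.map, Comma.mapRight]; rfl)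
      (fun f g ψ => by
        apply CostructuredArrow.ext
        simp [preC, CostructuredArrow.map, Comma.mapRight])

/-- The comparison `F(k)(x) ⟶ F(h)(F(g)(x))` for `g ≫ h = k`. -/
abbrev tr (F : ↥I ⥤ Cat.{0,0}) {a b c : ↥I} (g : a ⟶ b) (h : b ⟶ c) (k : a ⟶ c) (e : g ≫ h = k)
    (x : ↥(F.obj a)) :
    (F.map k).toFunctor.obj x ⟶ (F.map h).toFunctor.obj ((F.map g).toFunctor.obj x) :=
  eqToHom (by subst e; rw [CategoryTheory.Functor.map_comp]; rfl)

theorem tr_id (F : ↥I ⥤ Cat.{0,0}) {a c : ↥I} (g : a ⟶ a) (hg : g = 𝟙 a) (h : a ⟶ c)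
    (e : g ≫ h = h) (x : ↥(F.obj a)) (p : (F.map g).toFunctor.obj x = x) :
    tr F g h h e x ≫ (F.map h).toFunctor.map (eqToHom p) = 𝟙 _ := by
  subst hg
  simp [tr, eqToHom_map]

theorem tr_comp (F : ↥I ⥤ Cat.{0,0}) {a b c d : ↥I} (g1 : a ⟶ b) (g2 : b ⟶ c) (g : a ⟶ c)
    (hg : g = g1 ≫ g2) (h : c ⟶ d) (h' : b ⟶ d) (k : a ⟶ d) (e : g ≫ h = k) (e1 : g1 ≫ h' = k)
    (e2 : g2 ≫ h = h') (x : ↥(F.obj a)) (y : ↥(F.obj b)) (z : ↥(F.obj c))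
    (α : (F.map g1).toFunctor.obj x ⟶ y) (β : (F.map g2).toFunctor.obj y ⟶ z)
    (p : (F.map g).toFunctor.obj x = (F.map g2).toFunctor.obj ((F.map g1).toFunctor.obj x)) :
    tr F g h k e x ≫ (F.map h).toFunctor.map (eqToHom p ≫ (F.map g2).toFunctor.map α ≫ β)
      = (tr F g1 h' k e1 x ≫ (F.map h').toFunctor.map α) ≫
        (tr F g2 h h' e2 y ≫ (F.map h).toFunctor.map β) := by
  subst hg e2 e
  have hh := Functor.congr_hom (congrArg Cat.Hom.toFunctor (F.map_comp g2 h)) α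
  dsimp at hh
  simp [tr, eqToHom_map, hh]

theorem tr_nat (F : ↥I ⥤ Cat.{0,0}) {a b c d : ↥I} (g : a ⟶ b) (h : b ⟶ c) (k : a ⟶ c)
    (e : g ≫ h = k) (l : c ⟶ d) (e' : g ≫ h ≫ l = k ≫ l) (x : ↥(F.obj a)) (y : ↥(F.obj b))
    (α : (F.map g).toFunctor.obj x ⟶ y)
    (p : (F.map (k ≫ l)).toFunctor.obj x = (F.map l).toFunctor.obj ((F.map k).toFunctor.obj x))
    (q : (F.map l).toFunctor.obj ((F.map h).toFunctor.obj y) = (F.map (h ≫ l)).toFunctor.obj y) :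
    tr F g (h ≫ l) (k ≫ l) e' x ≫ (F.map (h ≫ l)).toFunctor.map α
      = eqToHom p ≫ (F.map l).toFunctor.map (tr F g h k e x ≫ (F.map h).toFunctor.map α) ≫
        eqToHom q := by
  subst e
  have hh := Functor.congr_hom (congrArg Cat.Hom.toFunctor (F.map_comp h l)) α
  dsimp at hh
  simp [tr, eqToHom_map, hh]

/-- The counit component functor. -/
abbrev epsApp (F : ↥I ⥤ Cat.{0,0}) (i : ↥I) :
    CostructuredArrow (pw w F) i ⥤ ↥(F.obj i) where
  obj f := (F.map f.hom).toFunctor.obj f.left.fiber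
  map {f f'} φ := tr F (w.toFunctor.map φ.left.base) f'.hom f.hom (CostructuredArrow.w φ)
      f.left.fiber ≫ (F.map f'.hom).toFunctor.map φ.left.fiber
  map_id f := tr_id F _ (by simp) _ _ _ (by simp)
  map_comp {f f' f''} φ ψ := tr_comp F _ _ _ (by simp) _ _ _ _ _ _ _ _ _ _ _ _

theorem epsNatty (F : ↥I ⥤ Cat.{0,0}) {i i' : ↥I} (k : i ⟶ i') :
    CostructuredArrow.map (S := pw w F) k
        ⋙ epsApp w F i' = epsApp w F i ⋙ (F.map k).toFunctor := by
  refine CategoryTheory.Functor.ext (fun f => ?_) (fun f f' φ => ?_)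
  · show (F.map (f.hom ≫ k)).toFunctor.obj f.left.fiber
      = (F.map k).toFunctor.obj ((F.map f.hom).toFunctor.obj f.left.fiber)
    rw [CategoryTheory.Functor.map_comp]
    rfl
  · exact tr_nat F _ _ _ _ _ _ _ _ _ _ _

/-- The counit natural transformation at `F`. -/
def epsNat (F : ↥I ⥤ Cat.{0,0}) :
    (Over.map w ⋙ overToFunctor I).obj
      (((Functor.whiskeringLeft ↥J ↥I Cat.{0,0}).obj w.toFunctor ⋙ Grothendieck.functor).obj F)
        ⟶ F where
  app i := catHom (epsApp w F i)
  naturality i i' k := Cat.Hom.ext (epsNatty w F k)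

/-- The counit, whiskered by `w`. -/
abbrev eα (F : ↥I ⥤ Cat.{0,0}) : wc w (csf (pw w F)) ⟶ wc w F where
  app j := ⟨epsApp w F (w.toFunctor.obj j)⟩
  naturality j j' k := Cat.Hom.ext (epsNatty w F (w.toFunctor.map k))

/-- `w ν`. -/
abbrev wν {F F' : ↥I ⥤ Cat.{0,0}} (ν : F ⟶ F') : wc w F ⟶ wc w F' where
  app j := ν.app (w.toFunctor.obj j)
  naturality j j' k := ν.naturality (w.toFunctor.map k)

theorem unitObj {A A' : Type} [Category.{0} A] [Category.{0} A'] (H : A ⥤ A')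
    (v' : A' ⥤ ↥J) (a : A) :
    (cmp H (etaG w v')).obj a = (cmp (etaG w (cmp H v')) (gmap (uα w H (cmp H v') v' rfl))).obj a := by
  refine grObjExt rfl (heq_of_eq ?_)
  simp [preC]

set_option maxHeartbeats 1000000 in
theorem unitNatty {A A' : Type} [Category.{0} A] [Category.{0} A'] (H : A ⥤ A') (v : A ⥤ ↥J)
    (v' : A' ⥤ ↥J) (hv : cmp H v' = v) :
    cmp H (etaG w v') = cmp (etaG w v) (gmap (uα w H v v' (by subst hv; rfl))) := by
  subst hv
  refine CategoryTheory.Functor.ext (unitObj w H v') (fun a a' φ => ?_)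
  refine Grothendieck.ext _ _ (by
    rw [Grothendieck.comp_base, Grothendieck.comp_base, Grothendieck.base_eqToHom,
      Grothendieck.base_eqToHom]
    simp) ?_
  apply CostructuredArrow.ext
  simp only [Grothendieck.fiber_eqToHom, Cat.eqToHom_app, CostructuredArrow.eqToHom_left,
    Grothendieck.comp_fiber, CostructuredArrow.comp_left]
  simp
  erw [Comma.eqToHom_left, Comma.eqToHom_left]
  simp

theorem cnHelp {C D : Type} [Category.{0} C] [Category.{0} D] (G1 G2 : C ⥤ D) (hG : G1 = G2)
    {x0 x y : C} (q : x0 = x) (n : x0 ⟶ x) (hn : n = eqToHom q) (m : x ⟶ y) {X1 X2 Y1 : D}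
    (a : X1 = G1.obj x0) (b : X1 = X2) (c : X2 = G2.obj x) (d : G2.obj y = Y1)
    (e : Y1 = G1.obj y) :
    eqToHom a ≫ G1.map (n ≫ m) = eqToHom b ≫ eqToHom c ≫ G2.map m ≫ eqToHom d ≫ eqToHom e := by
  subst hG hn q
  simp

theorem fibHelp (F : ↥I ⥤ Cat.{0,0}) {b : ↥I} (u : b ⟶ b) (hu : u = 𝟙 b)
    {x y : ↥(F.obj b)} (m : x ⟶ y) {X1 X2 X3 X4 : ↥(F.obj b)}
    (a : X1 = X2) (c : X1 = X3) (d : X3 = X4) (e : X4 = (F.map u).toFunctor.obj x)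
    (g : (F.map u).toFunctor.obj y = (F.map (𝟙 b)).toFunctor.obj y)
    (b' : X2 = (F.map (𝟙 b)).toFunctor.obj x) :
    eqToHom a ≫ eqToHom b' ≫ (F.map (𝟙 b)).toFunctor.map m
      = eqToHom c ≫ eqToHom d ≫ eqToHom e ≫ (F.map u).toFunctor.map m ≫
        eqToHom g := by
  subst hu
  simp

theorem counitObj {F F' : ↥I ⥤ Cat.{0,0}} (ν : F ⟶ F') (i : ↥I) (f : CostructuredArrow (pw w F) i) :
    (cmp (preC (gmap (wν w ν)) (pw w F) (pw w F') rfl i) (epsApp w F' i)).obj f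
      = (cmp (epsApp w F i) (ν.app i).toFunctor).obj f := by
  have h1 := Functor.congr_obj (congrArg Cat.Hom.toFunctor (ν.naturality f.hom)) f.left.fiber
  simp [preC]
  exact h1.symm

set_option maxHeartbeats 1000000 in
theorem counitNatty {F F' : ↥I ⥤ Cat.{0,0}} (ν : F ⟶ F') (i : ↥I) :
    cmp (preC (gmap (wν w ν)) (pw w F) (pw w F') rfl i) (epsApp w F' i)
      = cmp (epsApp w F i) (ν.app i).toFunctor := by
  refine CategoryTheory.Functor.ext (counitObj w ν i) (fun f f' φ => ?_)
  have h := Functor.congr_hom (congrArg Cat.Hom.toFunctor (ν.naturality f'.hom)) φ.left.fiber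
  dsimp at h
  simp [preC, tr, eqToHom_map, Cat.eqToHom_app, h]
  exact cnHelp (F'.map (𝟙 (w.toFunctor.obj f'.left.base) ≫ f'.hom)).toFunctor
    (F'.map f'.hom).toFunctor (congrArg (fun k => (F'.map k).toFunctor) (Category.id_comp _)) _
    ((eqToHom (ν.naturality (w.toFunctor.map φ.left.base)).symm).toNatTrans.app f.left.fiber)
    (Cat.eqToHom_app _ _ _ _) ((ν.app (w.toFunctor.obj f'.left.base)).toFunctor.map φ.left.fiber)
    _ _ _ _ _

theorem csaHelp {A : Type} [Category.{0} A] {X0 X1 Y : A} (p q : X0 = X1) (r : Y = Y)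
    (m : X1 ⟶ Y) : eqToHom p ≫ m = eqToHom q ≫ m ≫ eqToHom r := by
  subst p
  simp

theorem leftObj {A : Type} [Category.{0} A] (v : A ⥤ ↥J) (i : ↥I) (f : CostructuredArrow (vw w v) i) :
    (cmp (preC (etaG w v) (vw w v) (pw w (csf (vw w v))) rfl i) (epsApp w (csf (vw w v)) i)).obj f
      = (idf _).obj f := by
  simp [preC]
  exact (CostructuredArrow.eq_mk f).symm

set_option maxHeartbeats 1000000 in
theorem leftTriangle {A : Type} [Category.{0} A] (v : A ⥤ ↥J) (i : ↥I) :
    cmp (preC (etaG w v) (vw w v) (pw w (csf (vw w v))) rfl i) (epsApp w (csf (vw w v)) i)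
      = idf _ := by
  refine CategoryTheory.Functor.ext (leftObj w v i) (fun f f' ψ => ?_)
  apply CostructuredArrow.ext
  simp [preC, tr]
  erw [Comma.eqToHom_left, Comma.eqToHom_left, Comma.eqToHom_left]
  exact csaHelp _ _ _ ψ.left

theorem rightObj (F : ↥I ⥤ Cat.{0,0}) (p : Grothendieck (wc w F)) :
    (cmp (etaG w (fg w F)) (gmap (eα w F))).obj p = (idf (Grothendieck (wc w F))).obj p := by
  refine grObjExt rfl (heq_of_eq ?_)
  simp

set_option maxHeartbeats 1000000 in
theorem rightTriangle (F : ↥I ⥤ Cat.{0,0}) :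
    cmp (etaG w (fg w F)) (gmap (eα w F)) = idf (Grothendieck (wc w F)) := by
  refine CategoryTheory.Functor.ext (rightObj w F) (fun p p' φ => ?_)
  refine Grothendieck.ext _ _ (by
    rw [Grothendieck.comp_base, Grothendieck.comp_base, Grothendieck.base_eqToHom,
      Grothendieck.base_eqToHom]
    simp) ?_
  rw [Grothendieck.comp_fiber, Grothendieck.comp_fiber, Grothendieck.fiber_eqToHom,
    Grothendieck.fiber_eqToHom]
  have h := Functor.congr_hom (congrArg Cat.Hom.toFunctor (F.map_id (w.toFunctor.obj p'.base)))
    φ.fiber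
  dsimp at h
  simp [tr, eqToHom_map, Cat.eqToHom_app, h]
  exact fibHelp F _ (by rw [Grothendieck.base_eqToHom]; simp) _ _ _ _ _ _ _

def theAdjunction :
    (Over.map w ⋙ overToFunctor I) ⊣
      ((Functor.whiskeringLeft ↥J ↥I Cat.{0,0}).obj w.toFunctor ⋙ Grothendieck.functor) where
  unit :=
    { app := fun X => Over.homMk (etaG w X.hom.toFunctor).toCatHom rfl
      naturality := fun X X' h => Over.OverMorphism.ext (Cat.Hom.ext
        (unitNatty w h.left.toFunctor X.hom.toFunctor X'.hom.toFunctor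
          (congrArg Cat.Hom.toFunctor (Over.w h)))) }
  counit :=
    { app := fun F => epsNat w F
      naturality := fun F F' ν => by
        apply NatTrans.ext
        funext i
        exact Cat.Hom.ext (counitNatty w ν i) }
  left_triangle_components X := by
    apply NatTrans.ext
    funext i
    exact Cat.Hom.ext (leftTriangle w X.hom.toFunctor i)
  right_triangle_components F := Over.OverMorphism.ext (Cat.Hom.ext (rightTriangle w F))


/-- For `w : J ⥤ I`, the functor `Cat/J ⥤ (I ⥤ Cat)`, `(A, v) ↦ (i ↦ (w ∘ v)/i)`, is
left adjoint to the functor `(I ⥤ Cat) ⥤ Cat/J`, `F ↦ (∫(w ⋙ F) ⥤ J)`. -/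
theorem overToFunctor_adjunction {J I : Cat.{0,0}} (w : J ⟶ I) :
    Nonempty ((Over.map w ⋙ overToFunctor I) ⊣
      ((Functor.whiskeringLeft ↥J ↥I Cat.{0,0}).obj w.toFunctor ⋙ Grothendieck.functor)) :=
  ⟨theAdjunction w⟩

end Paper
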